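/- Let A be a self-adjoint endomorphism with all eigenvalues negative (an elliptic point). If H_r > 0, where H_r = (−1)^r S_r / (n choose r), then the Newton transformation P_{r−1} is positive definite. -/

import Mathlib

open scoped InnerProductSpace

/-- The `r`-th elementary symmetric polynomial of `λ₁, …, λₙ`. -/
noncomputable def esymm (n r : ℕ) (l : Fin n → ℝ) : ℝ :=
  ∑ s ∈ (Finset.univ : Finset (Fin n)).powersetCard r, ∏ i ∈ s, l i

/-- The Newton transformations associated to an endomorphism `A` and the
elementary symmetric functions `S` of its eigenvalues:
`P₀ = I`, `P_r = (−1)^r S_r I + A ∘ P_{r−1}`. -/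
noncomputable def newtonP {E : Type*} [NormedAddCommGroup E] [InnerProductSpace ℝ E]
    (A : E →ₗ[ℝ] E) (S : ℕ → ℝ) : ℕ → (E →ₗ[ℝ] E)
  | 0 => LinearMap.id
  | r + 1 => ((-1 : ℝ) ^ (r + 1) * S (r + 1)) • LinearMap.id + A ∘ₗ newtonP A S r

/-- The elementary symmetric function of the eigenvalues omitting index `i`. -/
noncomputable def esymmEx (n : ℕ) (lam : Fin n → ℝ) (i : Fin n) (k : ℕ) : ℝ :=
  ∑ s ∈ ((Finset.univ : Finset (Fin n)).erase i).powersetCard k, ∏ j ∈ s, lam j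

lemma esymm_split (n : ℕ) (lam : Fin n → ℝ) (i : Fin n) (k : ℕ) :
    esymm n (k + 1) lam = esymmEx n lam i (k + 1) + lam i * esymmEx n lam i k := by
  classical
  have hu : (Finset.univ : Finset (Fin n)) = insert i (Finset.univ.erase i) := by
    rw [Finset.insert_erase (Finset.mem_univ i)]
  rw [esymm, hu, Finset.powersetCard_succ_insert (Finset.notMem_erase i _)]
  rw [Finset.sum_union]
  · congr 1
    rw [esymmEx, Finset.mul_sum]
    rw [Finset.sum_image]
    · refine Finset.sum_congr rfl fun s hs => ?_
      have hi : i ∉ s := fun h =>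
        Finset.notMem_erase i _ ((Finset.mem_powersetCard.1 hs).1 h)
      rw [Finset.prod_insert hi]
    · intro s hs t ht hst
      have hi : i ∉ s := fun h =>
        Finset.notMem_erase i _ ((Finset.mem_powersetCard.1 hs).1 h)
      have hi' : i ∉ t := fun h =>
        Finset.notMem_erase i _ ((Finset.mem_powersetCard.1 ht).1 h)
      exact Finset.insert_erase_invOn.2.injOn (by simpa using hi) (by simpa using hi') hst
  · rw [Finset.disjoint_right]
    intro s hs hs'
    obtain ⟨t, ht, rfl⟩ := Finset.mem_image.1 hs
    exact Finset.notMem_erase i _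
      ((Finset.mem_powersetCard.1 hs').1 (Finset.mem_insert_self i t))

lemma newtonP_eigen {E : Type*} [NormedAddCommGroup E] [InnerProductSpace ℝ E]
    {n : ℕ} (A : E →ₗ[ℝ] E) (b : Fin n → E) (lam : Fin n → ℝ)
    (hb : ∀ i, A (b i) = lam i • b i)
    (S : ℕ → ℝ) (hS : ∀ r, S r = esymm n r lam) (i : Fin n) :
    ∀ k : ℕ, newtonP A S k (b i) = ((-1 : ℝ) ^ k * esymmEx n lam i k) • b i := by
  intro k
  induction k with
  | zero =>
    simp [newtonP, esymmEx]
  | succ k ih =>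
    have hsplit := esymm_split n lam i k
    simp only [newtonP, LinearMap.add_apply, LinearMap.smul_apply, LinearMap.id_apply,
      LinearMap.comp_apply, ih, map_smul, hb i, hS (k + 1), hsplit, smul_smul]
    rw [← add_smul]
    congr 1
    ring

lemma esymmEx_pos {n : ℕ} (lam : Fin n → ℝ) (hneg : ∀ i, lam i < 0)
    (i : Fin n) (k : ℕ) (hk : k + 1 ≤ n) :
    0 < (-1 : ℝ) ^ k * esymmEx n lam i k := by
  classical
  have hcard : ((Finset.univ : Finset (Fin n)).erase i).card = n - 1 := by
    simp [Finset.card_erase_of_mem]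
  have hne : (((Finset.univ : Finset (Fin n)).erase i).powersetCard k).Nonempty := by
    rw [Finset.powersetCard_nonempty, hcard]
    omega
  rw [esymmEx, Finset.mul_sum]
  refine Finset.sum_pos (fun s hs => ?_) hne
  have hcs : s.card = k := (Finset.mem_powersetCard.1 hs).2
  have : (-1 : ℝ) ^ k * ∏ j ∈ s, lam j = ∏ j ∈ s, (-lam j) := by
    have : ∀ j ∈ s, -lam j = (-1 : ℝ) * lam j := fun j _ => by ring
    rw [Finset.prod_congr rfl this, Finset.prod_mul_distrib, Finset.prod_const, hcs]
  rw [this]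
  exact Finset.prod_pos fun j _ => neg_pos.2 (hneg j)

/-- If all eigenvalues of `A` are negative (elliptic point) and
`H_r = (−1)^r S_r / (n choose r) > 0`, then `P_{r−1}` is positive definite. -/
theorem newtonP_posDef_of_elliptic {E : Type*} [NormedAddCommGroup E]
    [InnerProductSpace ℝ E] [FiniteDimensional ℝ E]
    (n : ℕ) (hdim : Module.finrank ℝ E = n)
    (A : E →ₗ[ℝ] E) (hA : A.IsSymmetric)
    (b : OrthonormalBasis (Fin n) ℝ E) (lam : Fin n → ℝ)
    (hb : ∀ i, A (b i) = lam i • b i)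
    (S : ℕ → ℝ) (hS : ∀ r, S r = esymm n r lam)
    (hneg : ∀ i, lam i < 0)
    (r : ℕ) (hr1 : 1 ≤ r) (hrn : r ≤ n)
    (hHr : 0 < (-1 : ℝ) ^ r * S r / (n.choose r)) :
    ∀ v : E, v ≠ 0 → 0 < ⟪newtonP A S (r - 1) v, v⟫_ℝ := by
  intro v hv
  set k := r - 1 with hk
  have hkn : k + 1 ≤ n := by omega
  set μ : Fin n → ℝ := fun i => (-1 : ℝ) ^ k * esymmEx n lam i k with hμ
  have hμpos : ∀ i, 0 < μ i := fun i => esymmEx_pos lam hneg i k hkn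
  set c : Fin n → ℝ := fun i => b.repr v i with hc
  have hvrepr : v = ∑ i, c i • b i := (b.sum_repr v).symm
  have hPv : newtonP A S k v = ∑ i, (c i * μ i) • b i := by
    conv_lhs => rw [hvrepr]
    rw [map_sum]
    refine Finset.sum_congr rfl fun i _ => ?_
    rw [map_smul, newtonP_eigen A b lam hb S hS i k, smul_smul]
  rw [hPv]
  nth_rewrite 1 [hvrepr]
  rw [b.orthonormal.inner_sum]
  have hex : ∃ i, c i ≠ 0 := by
    by_contra h
    push_neg at h
    apply hv
    rw [hvrepr]
    simp [h]
  obtain ⟨i₀, hi₀⟩ := hex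
  refine Finset.sum_pos' (fun i _ => ?_) ⟨i₀, Finset.mem_univ i₀, ?_⟩
  · simp only [RCLike.star_def, starRingEnd_apply, star_trivial]
    nlinarith [hμpos i, sq_nonneg (c i)]
  · simp only [RCLike.star_def, starRingEnd_apply, star_trivial]
    nlinarith [hμpos i₀, mul_self_pos.2 hi₀]
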